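/- There is an absolute constant K > 0 such that for all distinct primes p₁ and p₂ and every real κ ≥ 2: ∑ p₁^{−a}·p₂^{−b} ≤ K·(log κ)/κ, where the sum is over all pairs of nonnegative integers (a, b) with p₁^a·p₂^b > κ. -/
import Mathlib

open ENNReal

lemma geomTail (x : ℝ≥0∞) (hx : x ≤ 2⁻¹) (n : ℕ) :
    (∑' a : ℕ, if n ≤ a then x ^ a else 0) ≤ 2 * x ^ n := by
  set f : ℕ → ℝ≥0∞ := fun a => if n ≤ a then x ^ a else 0 with hf
  have hinj : Function.Injective (fun b : ℕ => n + b) := fun a b h => by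
    simpa using h
  have hsupp : Function.support f ⊆ Set.range (fun b : ℕ => n + b) := by
    intro a ha
    have hna : n ≤ a := by
      by_contra h
      simp [hf, h] at ha
    exact ⟨a - n, by simpa using Nat.add_sub_cancel' hna⟩
  have h1 : (∑' a : ℕ, f a) = ∑' b : ℕ, x ^ (n + b) := by
    rw [← tsum_subtype_eq_of_support_subset hsupp, tsum_range f hinj]
    simp [hf]
  have h2 : (∑' b : ℕ, x ^ (n + b)) = (1 - x)⁻¹ * x ^ n := by
    simp only [pow_add, ENNReal.tsum_mul_left, ENNReal.tsum_geometric]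
    ring
  have h3 : (1 - x)⁻¹ ≤ 2 := by
    have hx2 : (2 : ℝ≥0∞)⁻¹ ≤ 1 - x := by
      refine ENNReal.le_sub_of_add_le_right (hx.trans_lt (by simp)).ne ?_
      calc (2:ℝ≥0∞)⁻¹ + x ≤ 2⁻¹ + 2⁻¹ := by gcongr
        _ = 1 := ENNReal.inv_two_add_inv_two
    calc (1 - x)⁻¹ ≤ ((2:ℝ≥0∞)⁻¹)⁻¹ := ENNReal.inv_le_inv' hx2
      _ = 2 := by simp
  rw [h1, h2]
  gcongr

lemma innerTail (p : ℕ) (hp : 2 ≤ p) (t : ℝ) (ht : 0 < t) :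
    (∑' b : ℕ, if t < (p : ℝ) ^ b then ENNReal.ofReal (((p : ℝ) ^ b)⁻¹) else 0)
      ≤ 2 * ENNReal.ofReal (min 1 t⁻¹) := by
  have hp1 : (1 : ℝ) < (p : ℝ) := by exact_mod_cast hp.trans_lt' one_lt_two
  have hp0 : (0 : ℝ) < (p : ℝ) := by linarith
  have hex : ∃ b : ℕ, t < (p : ℝ) ^ b := pow_unbounded_of_one_lt t hp1
  set b₀ := Nat.find hex with hb₀
  have hspec : t < (p : ℝ) ^ b₀ := Nat.find_spec hex
  set x : ℝ≥0∞ := ENNReal.ofReal ((p : ℝ)⁻¹) with hxdef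
  have hx : x ≤ 2⁻¹ := by
    have h2 : ((p : ℝ))⁻¹ ≤ (2 : ℝ)⁻¹ := by
      have : (2 : ℝ) ≤ (p : ℝ) := by exact_mod_cast hp
      exact inv_anti₀ (by norm_num) this
    have h3 : ENNReal.ofReal ((2:ℝ)⁻¹) = 2⁻¹ := by
      rw [ENNReal.ofReal_inv_of_pos (by norm_num)]
      norm_num
    rw [hxdef, ← h3]
    exact ENNReal.ofReal_le_ofReal h2
  have hxb : ∀ b : ℕ, ENNReal.ofReal (((p : ℝ) ^ b)⁻¹) = x ^ b := by
    intro b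
    rw [hxdef, ← ENNReal.ofReal_pow (by positivity), ← inv_pow]
  have hcond : ∀ b : ℕ, (t < (p : ℝ) ^ b) ↔ b₀ ≤ b := by
    intro b
    constructor
    · intro h; exact Nat.find_le h
    · intro h
      calc t < (p : ℝ) ^ b₀ := hspec
        _ ≤ (p : ℝ) ^ b := pow_le_pow_right₀ hp1.le h
  have heq : (∑' b : ℕ, if t < (p : ℝ) ^ b then ENNReal.ofReal (((p : ℝ) ^ b)⁻¹) else 0)
      = ∑' b : ℕ, if b₀ ≤ b then x ^ b else 0 := by
    congr 1; funext b; rw [hxb b]; simp only [hcond b]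
  rw [heq]
  refine (geomTail x hx b₀).trans ?_
  gcongr
  rw [← hxb b₀]
  apply ENNReal.ofReal_le_ofReal
  refine le_min ?_ ?_
  · rw [inv_le_one₀ (by positivity)]; exact one_le_pow₀ hp1.le
  · rw [inv_le_inv₀ (by positivity) ht]; exact hspec.le


lemma xhalf (p : ℕ) (hp : 2 ≤ p) : ENNReal.ofReal ((p : ℝ)⁻¹) ≤ 2⁻¹ := by
  have h2 : ((p : ℝ))⁻¹ ≤ (2 : ℝ)⁻¹ := by
    have : (2 : ℝ) ≤ (p : ℝ) := by exact_mod_cast hp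
    exact inv_anti₀ (by norm_num) this
  have h3 : ENNReal.ofReal ((2:ℝ)⁻¹) = 2⁻¹ := by
    rw [ENNReal.ofReal_inv_of_pos (by norm_num)]
    norm_num
  rw [← h3]
  exact ENNReal.ofReal_le_ofReal h2

lemma outerSum (p : ℕ) (hp : 2 ≤ p) (κ : ℝ) (hκ : 2 ≤ κ) :
    (∑' a : ℕ, ENNReal.ofReal (min (((p : ℝ) ^ a)⁻¹) κ⁻¹))
      ≤ ENNReal.ofReal (6 * (Real.log κ / κ)) := by
  have hκ0 : (0 : ℝ) < κ := by linarith
  have hp1 : (1 : ℝ) < (p : ℝ) := by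
    have : (2:ℝ) ≤ (p:ℝ) := by exact_mod_cast hp
    linarith
  have hex : ∃ a : ℕ, κ < (p : ℝ) ^ a := pow_unbounded_of_one_lt κ hp1
  set a₀ := Nat.find hex with ha₀def
  have hspec : κ < (p : ℝ) ^ a₀ := Nat.find_spec hex
  set x : ℝ≥0∞ := ENNReal.ofReal ((p : ℝ)⁻¹) with hxdef
  have hx : x ≤ 2⁻¹ := xhalf p hp
  have hxb : ∀ b : ℕ, ENNReal.ofReal (((p : ℝ) ^ b)⁻¹) = x ^ b := by
    intro b
    rw [hxdef, ← ENNReal.ofReal_pow (by positivity), ← inv_pow]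
  have hpt : (fun a : ℕ => ENNReal.ofReal (min (((p : ℝ) ^ a)⁻¹) κ⁻¹))
      = (fun a : ℕ => (if a < a₀ then ENNReal.ofReal κ⁻¹ else 0)
          + (if a₀ ≤ a then x ^ a else 0)) := by
    funext a
    by_cases h : a < a₀
    · have hle : (p : ℝ) ^ a ≤ κ := le_of_not_gt (Nat.find_min hex h)
      have hmin : min (((p : ℝ) ^ a)⁻¹) κ⁻¹ = κ⁻¹ :=
        min_eq_right (inv_anti₀ (by positivity) hle)
      simp [h, Nat.not_le.mpr h, hmin]
    · push_neg at h
      have hgt : κ < (p : ℝ) ^ a :=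
        hspec.trans_le (pow_le_pow_right₀ hp1.le h)
      have hmin : min (((p : ℝ) ^ a)⁻¹) κ⁻¹ = ((p : ℝ) ^ a)⁻¹ :=
        min_eq_left (inv_anti₀ hκ0 hgt.le)
      simp [Nat.not_lt.mpr h, h, hmin, hxb a]
  rw [hpt, ENNReal.tsum_add]
  have hsum1 : (∑' a : ℕ, if a < a₀ then ENNReal.ofReal κ⁻¹ else 0)
      = (a₀ : ℝ≥0∞) * ENNReal.ofReal κ⁻¹ := by
    rw [tsum_eq_sum (s := Finset.range a₀) (by
      intro b hb
      simp only [Finset.mem_range] at hb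
      simp [hb])]
    rw [Finset.sum_ite_of_true (by intro b hb; simpa using hb)]
    simp [Finset.sum_const, nsmul_eq_mul]
  have hsum2 : (∑' a : ℕ, if a₀ ≤ a then x ^ a else 0) ≤ 2 * ENNReal.ofReal κ⁻¹ := by
    refine (geomTail x hx a₀).trans ?_
    gcongr
    rw [← hxb a₀]
    exact ENNReal.ofReal_le_ofReal (inv_anti₀ hκ0 hspec.le)
  have hl2 : (0.6931471803 : ℝ) < Real.log 2 := Real.log_two_gt_d9
  have hlκ : Real.log 2 ≤ Real.log κ := Real.log_le_log (by norm_num) hκ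
  have hm : (a₀ : ℝ) * Real.log 2 ≤ Real.log κ + Real.log 2 := by
    rcases Nat.eq_zero_or_pos a₀ with h0 | h0
    · rw [h0]; push_cast; nlinarith
    · have hnm : ¬ κ < (p : ℝ) ^ (a₀ - 1) := Nat.find_min hex (by omega)
      push_neg at hnm
      have h2p : (2 : ℝ) ^ (a₀ - 1) ≤ (p : ℝ) ^ (a₀ - 1) := by
        apply pow_le_pow_left₀ (by norm_num)
        exact_mod_cast hp
      have hlog : ((a₀ - 1 : ℕ) : ℝ) * Real.log 2 ≤ Real.log κ := by
        rw [← Real.log_pow]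
        exact Real.log_le_log (by positivity) (h2p.trans hnm)
      have hcast : ((a₀ - 1 : ℕ) : ℝ) = (a₀ : ℝ) - 1 := by
        push_cast [Nat.cast_sub h0]
        ring
      rw [hcast] at hlog
      nlinarith
  have hgoal : ((a₀ : ℝ) + 2) ≤ 6 * Real.log κ := by nlinarith
  calc (∑' a : ℕ, if a < a₀ then ENNReal.ofReal κ⁻¹ else 0)
        + (∑' a : ℕ, if a₀ ≤ a then x ^ a else 0)
      ≤ (a₀ : ℝ≥0∞) * ENNReal.ofReal κ⁻¹ + 2 * ENNReal.ofReal κ⁻¹ := by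
        rw [hsum1]; gcongr
    _ = ENNReal.ofReal (((a₀ : ℝ) + 2) * κ⁻¹) := by
        rw [ENNReal.ofReal_mul (by positivity), ENNReal.ofReal_add (by positivity) (by norm_num),
          add_mul, ENNReal.ofReal_natCast]
        norm_num
    _ ≤ ENNReal.ofReal (6 * (Real.log κ / κ)) := by
        apply ENNReal.ofReal_le_ofReal
        calc ((a₀ : ℝ) + 2) * κ⁻¹ ≤ (6 * Real.log κ) * κ⁻¹ := by
              apply mul_le_mul_of_nonneg_right hgoal (by positivity)
          _ = 6 * (Real.log κ / κ) := by ring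


theorem stmt14 :
    ∃ K > (0 : ℝ), ∀ p₁ p₂ : ℕ, p₁.Prime → p₂.Prime → p₁ ≠ p₂ →
      ∀ κ : ℝ, 2 ≤ κ →
      (∑' ab : {ab : ℕ × ℕ // κ < (p₁ : ℝ) ^ ab.1 * (p₂ : ℝ) ^ ab.2},
          ((p₁ : ℝ) ^ (ab : ℕ × ℕ).1 * (p₂ : ℝ) ^ (ab : ℕ × ℕ).2)⁻¹) ≤
        K * Real.log κ / κ := by
  refine ⟨12, by norm_num, ?_⟩
  intro p₁ p₂ hp₁ hp₂ _ κ hκ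
  have h₁ : 2 ≤ p₁ := hp₁.two_le
  have h₂ : 2 ≤ p₂ := hp₂.two_le
  have hκ0 : (0 : ℝ) < κ := by linarith
  have hP1 : (0 : ℝ) < (p₁ : ℝ) := by positivity
  set f : ℕ × ℕ → ℝ := fun ab => ((p₁ : ℝ) ^ ab.1 * (p₂ : ℝ) ^ ab.2)⁻¹ with hfdef
  have hf0 : ∀ ab : ℕ × ℕ, 0 ≤ f ab := by
    intro ab
    have : (0:ℝ) < (p₁ : ℝ) ^ ab.1 * (p₂ : ℝ) ^ ab.2 := by positivity
    positivity
  set s : Set (ℕ × ℕ) := {ab : ℕ × ℕ | κ < (p₁ : ℝ) ^ ab.1 * (p₂ : ℝ) ^ ab.2} with hsdef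
  set F : ℕ × ℕ → ℝ≥0∞ := fun ab =>
    if κ < (p₁ : ℝ) ^ ab.1 * (p₂ : ℝ) ^ ab.2 then ENNReal.ofReal (f ab) else 0 with hFdef
  -- Step B : bound the ENNReal sum
  have hB : (∑' ab : ℕ × ℕ, F ab) ≤ ENNReal.ofReal (12 * (Real.log κ / κ)) := by
    rw [ENNReal.tsum_prod']
    have hrow : ∀ a : ℕ, (∑' b : ℕ, F (a, b))
        ≤ 2 * ENNReal.ofReal (min (((p₁ : ℝ) ^ a)⁻¹) κ⁻¹) := by
      intro a
      have hpa : (0:ℝ) < (p₁ : ℝ) ^ a := by positivity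
      have hFab : ∀ b : ℕ, F (a, b) = ENNReal.ofReal (((p₁ : ℝ) ^ a)⁻¹) *
          (if κ / (p₁ : ℝ) ^ a < (p₂ : ℝ) ^ b then ENNReal.ofReal (((p₂ : ℝ) ^ b)⁻¹) else 0) := by
        intro b
        have hcond : (κ < (p₁ : ℝ) ^ a * (p₂ : ℝ) ^ b) ↔ (κ / (p₁ : ℝ) ^ a < (p₂ : ℝ) ^ b) := by
          rw [div_lt_iff₀ hpa, mul_comm]
        by_cases h : κ < (p₁ : ℝ) ^ a * (p₂ : ℝ) ^ b
        · rw [hFdef]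
          simp only [h, if_true, hcond.mp h, if_true, hfdef]
          rw [mul_inv, ENNReal.ofReal_mul (by positivity)]
        · rw [hFdef]
          simp only [h, if_false, (not_iff_not.mpr hcond).mp h, if_false, mul_zero]
      calc (∑' b : ℕ, F (a, b))
          = ENNReal.ofReal (((p₁ : ℝ) ^ a)⁻¹) *
            ∑' b : ℕ, (if κ / (p₁ : ℝ) ^ a < (p₂ : ℝ) ^ b
              then ENNReal.ofReal (((p₂ : ℝ) ^ b)⁻¹) else 0) := by
            rw [← ENNReal.tsum_mul_left]
            exact tsum_congr hFab
        _ ≤ ENNReal.ofReal (((p₁ : ℝ) ^ a)⁻¹) *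
            (2 * ENNReal.ofReal (min 1 (κ / (p₁ : ℝ) ^ a)⁻¹)) := by
            gcongr
            exact innerTail p₂ h₂ _ (by positivity)
        _ = 2 * ENNReal.ofReal (min (((p₁ : ℝ) ^ a)⁻¹) κ⁻¹) := by
            rw [← mul_assoc, mul_comm (ENNReal.ofReal _) 2, mul_assoc,
              ← ENNReal.ofReal_mul (by positivity)]
            congr 2
            rw [inv_div, mul_min_of_nonneg _ _ (by positivity : (0:ℝ) ≤ ((p₁ : ℝ) ^ a)⁻¹)]
            congr 1
            · ring
            · field_simp
    calc (∑' a : ℕ, ∑' b : ℕ, F (a, b))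
        ≤ ∑' a : ℕ, 2 * ENNReal.ofReal (min (((p₁ : ℝ) ^ a)⁻¹) κ⁻¹) :=
          ENNReal.tsum_le_tsum hrow
      _ = 2 * ∑' a : ℕ, ENNReal.ofReal (min (((p₁ : ℝ) ^ a)⁻¹) κ⁻¹) := ENNReal.tsum_mul_left
      _ ≤ 2 * ENNReal.ofReal (6 * (Real.log κ / κ)) := by
          gcongr
          exact outerSum p₁ h₁ κ hκ
      _ = ENNReal.ofReal (12 * (Real.log κ / κ)) := by
          rw [show (12:ℝ) * (Real.log κ / κ) = 2 * (6 * (Real.log κ / κ)) by ring,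
            ENNReal.ofReal_mul (by norm_num : (0:ℝ) ≤ 2),
            ENNReal.ofReal_mul (by norm_num : (0:ℝ) ≤ 6),
            ENNReal.ofReal_ofNat, ENNReal.ofReal_ofNat]
  -- Step A : identify the real sum with the toReal of the ENNReal sum
  have hA : (∑' ab : {ab : ℕ × ℕ // κ < (p₁ : ℝ) ^ ab.1 * (p₂ : ℝ) ^ ab.2},
      ((p₁ : ℝ) ^ (ab : ℕ × ℕ).1 * (p₂ : ℝ) ^ (ab : ℕ × ℕ).2)⁻¹)
      = (∑' ab : ℕ × ℕ, F ab).toReal := by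
    have e1 : (∑' ab : ℕ × ℕ, F ab) = ∑' x : s, ENNReal.ofReal (f x) := by
      rw [tsum_subtype s (fun ab => ENNReal.ofReal (f ab))]
      refine tsum_congr fun ab => ?_
      rw [Set.indicator_apply]
      by_cases h : ab ∈ s
      · simp only [h, if_true, hFdef]
        rw [if_pos]
        exact h
      · simp only [h, if_false, hFdef]
        rw [if_neg]
        exact h
    rw [e1, ENNReal.tsum_toReal_eq (fun _ => ENNReal.ofReal_ne_top)]
    refine tsum_congr fun x => ?_
    rw [ENNReal.toReal_ofReal (hf0 x)]
  rw [hA]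
  have hlog0 : 0 ≤ Real.log κ := Real.log_nonneg (by linarith)
  calc (∑' ab : ℕ × ℕ, F ab).toReal
      ≤ (ENNReal.ofReal (12 * (Real.log κ / κ))).toReal := by
        exact ENNReal.toReal_mono ENNReal.ofReal_ne_top hB
    _ = 12 * (Real.log κ / κ) := ENNReal.toReal_ofReal (by positivity)
    _ = 12 * Real.log κ / κ := by ring
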